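/- Let c ∈ ℂ and r > 0, and let w₁, w₂, w₃, w₄, w₅ ∈ ℂ all satisfy |wⱼ − c| = r. Assume w₁ ≠ w₂, w₂ ≠ w₃, w₃ ≠ w₄, w₄ ≠ w₅ and w₅ ≠ w₁, and let w₆ ∈ ℂ with w₆ ≠ w₁. If the multi-ratio M(w₁,w₂,w₃,w₄,w₅,w₆) is a real number, then |w₆ − c| = r, i.e. w₆ lies on the same circle. -/

import Mathlib

/-- The multi-ratio of six complex numbers. -/
noncomputable def multiRatio (w₁ w₂ w₃ w₄ w₅ w₆ : ℂ) : ℂ :=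
  ((w₁ - w₂) * (w₃ - w₄) * (w₅ - w₆)) / ((w₂ - w₃) * (w₄ - w₅) * (w₆ - w₁))

lemma multiRatio_aux (s a₁ a₂ a₃ a₄ a₅ z : ℂ) (hs0 : s ≠ 0)
    (hp1 : a₁ * (starRingEnd ℂ) a₁ = s)
    (hp2 : a₂ * (starRingEnd ℂ) a₂ = s)
    (hp3 : a₃ * (starRingEnd ℂ) a₃ = s)
    (hp4 : a₄ * (starRingEnd ℂ) a₄ = s)
    (hp5 : a₅ * (starRingEnd ℂ) a₅ = s)
    (d12 : a₁ - a₂ ≠ 0) (d23 : a₂ - a₃ ≠ 0) (d34 : a₃ - a₄ ≠ 0)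
    (d45 : a₄ - a₅ ≠ 0) (d51 : a₅ - a₁ ≠ 0) (d61 : z - a₁ ≠ 0)
    (hconjM : (starRingEnd ℂ)
        (((a₁ - a₂) * (a₃ - a₄) * (a₅ - z)) / ((a₂ - a₃) * (a₄ - a₅) * (z - a₁)))
      = ((a₁ - a₂) * (a₃ - a₄) * (a₅ - z)) / ((a₂ - a₃) * (a₄ - a₅) * (z - a₁))) :
    z * (starRingEnd ℂ) z = s := by
  set w := (starRingEnd ℂ) z with hw
  set b₁ := (starRingEnd ℂ) a₁ with hb1
  set b₂ := (starRingEnd ℂ) a₂ with hb2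
  set b₃ := (starRingEnd ℂ) a₃ with hb3
  set b₄ := (starRingEnd ℂ) a₄ with hb4
  set b₅ := (starRingEnd ℂ) a₅ with hb5
  rw [map_div₀, map_mul, map_mul, map_sub, map_sub, map_sub, map_mul, map_mul,
      map_sub, map_sub, map_sub, ← hw, ← hb1, ← hb2, ← hb3, ← hb4, ← hb5] at hconjM
  have e23 : b₂ - b₃ ≠ 0 := by
    rw [hb2, hb3, ← map_sub]
    simpa only [map_ne_zero] using d23
  have e45 : b₄ - b₅ ≠ 0 := by
    rw [hb4, hb5, ← map_sub]
    simpa only [map_ne_zero] using d45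
  have ew1 : w - b₁ ≠ 0 := by
    rw [hw, hb1, ← map_sub]
    simpa only [map_ne_zero] using d61
  rw [div_eq_div_iff (mul_ne_zero (mul_ne_zero e23 e45) ew1)
      (mul_ne_zero (mul_ne_zero d23 d45) d61)] at hconjM
  -- hconjM : (b₁-b₂)(b₃-b₄)(b₅-w) * ((a₂-a₃)(a₄-a₅)(z-a₁)) = N * ((b₂-b₃)(b₄-b₅)(w-b₁))
  have k12 : a₁ * a₂ * (b₁ - b₂) = s * (a₂ - a₁) := by linear_combination a₂ * hp1 - a₁ * hp2
  have k34 : a₃ * a₄ * (b₃ - b₄) = s * (a₄ - a₃) := by linear_combination a₄ * hp3 - a₃ * hp4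
  have k23 : a₂ * a₃ * (b₂ - b₃) = s * (a₃ - a₂) := by linear_combination a₃ * hp2 - a₂ * hp3
  have k45 : a₄ * a₅ * (b₄ - b₅) = s * (a₅ - a₄) := by linear_combination a₅ * hp4 - a₄ * hp5
  have k5 : a₅ * (b₅ - w) = s - a₅ * w := by linear_combination hp5
  have k1 : a₁ * (w - b₁) = a₁ * w - s := by linear_combination -hp1
  have hpoly : (s * (a₂ - a₁)) * (s * (a₄ - a₃)) * (s - a₅ * w) *
        ((a₂ - a₃) * (a₄ - a₅) * (z - a₁))
      = ((a₁ - a₂) * (a₃ - a₄) * (a₅ - z)) *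
        ((s * (a₃ - a₂)) * (s * (a₅ - a₄)) * (a₁ * w - s)) := by
    calc (s * (a₂ - a₁)) * (s * (a₄ - a₃)) * (s - a₅ * w) *
          ((a₂ - a₃) * (a₄ - a₅) * (z - a₁))
        = (a₁ * a₂ * (b₁ - b₂)) * (a₃ * a₄ * (b₃ - b₄)) * (a₅ * (b₅ - w)) *
          ((a₂ - a₃) * (a₄ - a₅) * (z - a₁)) := by rw [k12, k34, k5]
      _ = (a₁ * a₂ * a₃ * a₄ * a₅) *
          ((b₁ - b₂) * (b₃ - b₄) * (b₅ - w) * ((a₂ - a₃) * (a₄ - a₅) * (z - a₁))) := by ring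
      _ = (a₁ * a₂ * a₃ * a₄ * a₅) *
          ((a₁ - a₂) * (a₃ - a₄) * (a₅ - z) * ((b₂ - b₃) * (b₄ - b₅) * (w - b₁))) := by
            rw [hconjM]
      _ = ((a₁ - a₂) * (a₃ - a₄) * (a₅ - z)) *
          ((a₂ * a₃ * (b₂ - b₃)) * (a₄ * a₅ * (b₄ - b₅)) * (a₁ * (w - b₁))) := by ring
      _ = _ := by rw [k23, k45, k1]
  have d21 : a₂ - a₁ ≠ 0 := fun h => d12 (by linear_combination -h)
  have d43 : a₄ - a₃ ≠ 0 := fun h => d34 (by linear_combination -h)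
  have hF : s^2 * (a₂ - a₁) * (a₄ - a₃) * (a₂ - a₃) * (a₄ - a₅) ≠ 0 :=
    mul_ne_zero (mul_ne_zero (mul_ne_zero (mul_ne_zero (pow_ne_zero 2 hs0) d21) d43) d23) d45
  have hE2 : (s - a₅ * w) * (z - a₁) = (a₅ - z) * (a₁ * w - s) := by
    apply mul_left_cancel₀ hF
    linear_combination hpoly
  have hkey : (a₁ - a₅) * (z * w - s) = 0 := by linear_combination hE2
  rcases mul_eq_zero.1 hkey with h | h
  · exact absurd (by linear_combination -h : a₅ - a₁ = 0) d51
  · linear_combination h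


/-- If five points on a circle are joined by a sixth point so that the
multi-ratio of the six points is real, then the sixth point lies on the
same circle. -/
theorem multiRatio_real_implies_on_circle
    (c : ℂ) (r : ℝ) (hr : 0 < r)
    (w₁ w₂ w₃ w₄ w₅ w₆ : ℂ)
    (h₁ : ‖w₁ - c‖ = r)
    (h₂ : ‖w₂ - c‖ = r)
    (h₃ : ‖w₃ - c‖ = r)
    (h₄ : ‖w₄ - c‖ = r)
    (h₅ : ‖w₅ - c‖ = r)
    (h12 : w₁ ≠ w₂) (h23 : w₂ ≠ w₃) (h34 : w₃ ≠ w₄)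
    (h45 : w₄ ≠ w₅) (h51 : w₅ ≠ w₁) (h61 : w₆ ≠ w₁)
    (hreal : ∃ t : ℝ, multiRatio w₁ w₂ w₃ w₄ w₅ w₆ = (t : ℂ)) :
    ‖w₆ - c‖ = r := by
  have hs0 : ((r : ℂ)^2) ≠ 0 := pow_ne_zero 2 (by exact_mod_cast hr.ne')
  have hpval : ∀ (a : ℂ), ‖a‖ = r → a * (starRingEnd ℂ) a = (r : ℂ)^2 := by
    intro a ha
    rw [Complex.mul_conj, Complex.normSq_eq_norm_sq, ha]
    push_cast; ring
  obtain ⟨t, ht⟩ := hreal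
  have hMrw : multiRatio w₁ w₂ w₃ w₄ w₅ w₆
      = (((w₁-c) - (w₂-c)) * ((w₃-c) - (w₄-c)) * ((w₅-c) - (w₆-c))) /
        (((w₂-c) - (w₃-c)) * ((w₄-c) - (w₅-c)) * ((w₆-c) - (w₁-c))) := by
    unfold multiRatio; ring_nf
  have hconjM : (starRingEnd ℂ)
      ((((w₁-c) - (w₂-c)) * ((w₃-c) - (w₄-c)) * ((w₅-c) - (w₆-c))) /
        (((w₂-c) - (w₃-c)) * ((w₄-c) - (w₅-c)) * ((w₆-c) - (w₁-c))))
      = (((w₁-c) - (w₂-c)) * ((w₃-c) - (w₄-c)) * ((w₅-c) - (w₆-c))) /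
        (((w₂-c) - (w₃-c)) * ((w₄-c) - (w₅-c)) * ((w₆-c) - (w₁-c))) := by
    rw [← hMrw, ht, Complex.conj_ofReal]
  have dne : ∀ x y : ℂ, x ≠ y → (x - c) - (y - c) ≠ 0 := fun x y hxy h =>
    hxy (sub_eq_zero.1 (by linear_combination h))
  have key := multiRatio_aux ((r:ℂ)^2) (w₁-c) (w₂-c) (w₃-c) (w₄-c) (w₅-c) (w₆-c) hs0
    (hpval _ h₁) (hpval _ h₂) (hpval _ h₃) (hpval _ h₄) (hpval _ h₅)
    (dne _ _ h12) (dne _ _ h23) (dne _ _ h34) (dne _ _ h45) (dne _ _ h51) (dne _ _ h61)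
    hconjM
  have habs2 : (‖w₆ - c‖)^2 = r^2 := by
    rw [Complex.mul_conj, Complex.normSq_eq_norm_sq] at key
    exact_mod_cast key
  nlinarith [norm_nonneg (w₆ - c)]
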